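/- arXiv:1410.7626 — 5 statements merged into one kernel-verified Lean document; each statement's English description precedes it below -/
import Mathlib

section
/- Let V = b(e₂ + e₃) with b ≠ 0. Then V defines a harmonic map (i.e., ∇*∇V = 0 and Σ_{i=1}^{4} εᵢ R(∇_{eᵢ}V, V)eᵢ = 0) if and only if A = ((−3+√13)/2)·B or A = ((−3−√13)/2)·B (equivalently, B² = A² + 3AB). -/
set_option maxHeartbeats 1000000 in
theorem stmt_13 {G : Type*} [AddCommGroup G] [Module ℝ G]
    (e : Module.Basis (Fin 4) ℝ G)
    (lie : G →ₗ[ℝ] G →ₗ[ℝ] G)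
    (g : G →ₗ[ℝ] G →ₗ[ℝ] ℝ)
    (nabla : G →ₗ[ℝ] G →ₗ[ℝ] G)
    (A B b : ℝ) (hb : b ≠ 0)
    (hanti : ∀ X Y : G, lie X Y = - lie Y X)
    (h12 : lie (e 0) (e 1) = 0)
    (h13 : lie (e 0) (e 2) = 0)
    (h14 : lie (e 0) (e 3) = A • e 0)
    (h23 : lie (e 1) (e 2) = 0)
    (h24 : lie (e 1) (e 3) = A • e 1 + B • e 2)
    (h34 : lie (e 2) (e 3) = B • e 1 + A • e 2)
    (hg : ∀ i j : Fin 4, g (e i) (e j) = if i = j then (if i = 2 then (-1 : ℝ) else 1) else 0)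
    (hgsymm : ∀ X Y : G, g X Y = g Y X)
    (hK : ∀ X Y Z : G, 2 * g (nabla X Y) Z = g (lie X Y) Z - g (lie Y Z) X + g (lie Z X) Y) :
    (let eps : Fin 4 → ℝ := fun i => if i = (2 : Fin 4) then (-1 : ℝ) else 1
     let lap : G → G := fun V : G => ∑ i : Fin 4, eps i • (nabla (e i) (nabla (e i) V) - nabla (nabla (e i) (e i)) V)
     let tr : G → G := fun V : G => ∑ i : Fin 4, eps i • (nabla (lie (nabla (e i) V) V) (e i) - nabla (nabla (e i) V) (nabla V (e i)) + nabla V (nabla (nabla (e i) V) (e i)))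
     let V : G := b • (e 1 + e 2)
     (lap V = 0 ∧ tr V = 0) ↔
       (A = ((-3 + Real.sqrt 13) / 2) * B ∨ A = ((-3 - Real.sqrt 13) / 2) * B)) := by
  intro eps lap tr V
  have hlie0 : ∀ X : G, lie X X = 0 := by
    intro X
    have h1 := hanti X X
    have h2 : (2:ℝ) • lie X X = 0 := by
      rw [two_smul]; nth_rewrite 2 [h1]; abel
    simpa using (smul_eq_zero.mp h2).resolve_left (by norm_num)
  have h21 : lie (e 1) (e 0) = 0 := by rw [hanti, h12, neg_zero]
  have h31 : lie (e 2) (e 0) = 0 := by rw [hanti, h13, neg_zero]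
  have h32 : lie (e 2) (e 1) = 0 := by rw [hanti, h23, neg_zero]
  have h41 : lie (e 3) (e 0) = -(A • e 0) := by rw [hanti, h14]
  have h42 : lie (e 3) (e 1) = -(A • e 1 + B • e 2) := by rw [hanti, h24]
  have h43 : lie (e 3) (e 2) = -(B • e 1 + A • e 2) := by rw [hanti, h34]
  -- vectors agreeing against all basis vectors under g are equal
  have hext : ∀ X Y : G, (∀ k : Fin 4, g X (e k) = g Y (e k)) → X = Y := by
    intro X Y h
    apply e.ext_elem
    intro k
    have hXk : ∀ Z : G, g Z (e k) = (if k = 2 then (-1:ℝ) else 1) * e.repr Z k := by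
      intro Z
      conv_lhs => rw [← e.sum_repr Z]
      simp only [map_sum, map_smul, LinearMap.coe_sum, Finset.sum_apply,
        LinearMap.smul_apply, smul_eq_mul, hg]
      rw [Finset.sum_eq_single k]
      · by_cases hk : k = 2 <;> simp [hk]
      · intro i _ hik; simp [hik]
      · simp
    have hk := h k
    rw [hXk X, hXk Y] at hk
    by_cases h2 : k = 2
    · subst h2; simp at hk; linarith
    · simp [h2] at hk; linarith
  -- generic tool to identify connection values
  have mk : ∀ (i j : Fin 4) (W : G),
      (∀ k : Fin 4, g (lie (e i) (e j)) (e k) - g (lie (e j) (e k)) (e i)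
        + g (lie (e k) (e i)) (e j) = 2 * g W (e k)) → nabla (e i) (e j) = W := by
    intro i j W hW
    apply hext
    intro k
    have h1 := hK (e i) (e j) (e k)
    have h2 := hW k
    linarith
  -- the sixteen connection values
  have n00 : nabla (e 0) (e 0) = -(A • e 3) := by
    apply mk; intro k; fin_cases k <;>
      simp [hlie0, h12, h13, h14, h23, h24, h34, h21, h31, h32, h41, h42, h43, hg] <;> ring
  have n01 : nabla (e 0) (e 1) = 0 := by
    apply mk; intro k; fin_cases k <;>
      simp [hlie0, h12, h13, h14, h23, h24, h34, h21, h31, h32, h41, h42, h43, hg] <;> ring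
  have n02 : nabla (e 0) (e 2) = 0 := by
    apply mk; intro k; fin_cases k <;>
      simp [hlie0, h12, h13, h14, h23, h24, h34, h21, h31, h32, h41, h42, h43, hg] <;> ring
  have n03 : nabla (e 0) (e 3) = A • e 0 := by
    apply mk; intro k; fin_cases k <;>
      simp [hlie0, h12, h13, h14, h23, h24, h34, h21, h31, h32, h41, h42, h43, hg] <;> ring
  have n10 : nabla (e 1) (e 0) = 0 := by
    apply mk; intro k; fin_cases k <;>
      simp [hlie0, h12, h13, h14, h23, h24, h34, h21, h31, h32, h41, h42, h43, hg] <;> ring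
  have n11 : nabla (e 1) (e 1) = -(A • e 3) := by
    apply mk; intro k; fin_cases k <;>
      simp [hlie0, h12, h13, h14, h23, h24, h34, h21, h31, h32, h41, h42, h43, hg] <;> ring
  have n12 : nabla (e 1) (e 2) = 0 := by
    apply mk; intro k; fin_cases k <;>
      simp [hlie0, h12, h13, h14, h23, h24, h34, h21, h31, h32, h41, h42, h43, hg] <;> ring
  have n13 : nabla (e 1) (e 3) = A • e 1 := by
    apply mk; intro k; fin_cases k <;>
      simp [hlie0, h12, h13, h14, h23, h24, h34, h21, h31, h32, h41, h42, h43, hg] <;> ring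
  have n20 : nabla (e 2) (e 0) = 0 := by
    apply mk; intro k; fin_cases k <;>
      simp [hlie0, h12, h13, h14, h23, h24, h34, h21, h31, h32, h41, h42, h43, hg] <;> ring
  have n21 : nabla (e 2) (e 1) = 0 := by
    apply mk; intro k; fin_cases k <;>
      simp [hlie0, h12, h13, h14, h23, h24, h34, h21, h31, h32, h41, h42, h43, hg] <;> ring
  have n22 : nabla (e 2) (e 2) = A • e 3 := by
    apply mk; intro k; fin_cases k <;>
      simp [hlie0, h12, h13, h14, h23, h24, h34, h21, h31, h32, h41, h42, h43, hg] <;> ring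
  have n23 : nabla (e 2) (e 3) = A • e 2 := by
    apply mk; intro k; fin_cases k <;>
      simp [hlie0, h12, h13, h14, h23, h24, h34, h21, h31, h32, h41, h42, h43, hg] <;> ring
  have n30 : nabla (e 3) (e 0) = 0 := by
    apply mk; intro k; fin_cases k <;>
      simp [hlie0, h12, h13, h14, h23, h24, h34, h21, h31, h32, h41, h42, h43, hg] <;> ring
  have n31 : nabla (e 3) (e 1) = -(B • e 2) := by
    apply mk; intro k; fin_cases k <;>
      simp [hlie0, h12, h13, h14, h23, h24, h34, h21, h31, h32, h41, h42, h43, hg] <;> ring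
  have n32 : nabla (e 3) (e 2) = -(B • e 1) := by
    apply mk; intro k; fin_cases k <;>
      simp [hlie0, h12, h13, h14, h23, h24, h34, h21, h31, h32, h41, h42, h43, hg] <;> ring
  have n33 : nabla (e 3) (e 3) = 0 := by
    apply mk; intro k; fin_cases k <;>
      simp [hlie0, h12, h13, h14, h23, h24, h34, h21, h31, h32, h41, h42, h43, hg] <;> ring
  -- compute lap V
  have hlapV : lap V = (b * (B^2 - 3*A*B - A^2)) • e 1 + (b * (B^2 - 3*A*B - A^2)) • e 2 := by
    show (∑ i : Fin 4, eps i • (nabla (e i) (nabla (e i) (b • (e 1 + e 2)))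
      - nabla (nabla (e i) (e i)) (b • (e 1 + e 2)))) = _
    have e0 : eps 0 = 1 := rfl
    have e1 : eps 1 = 1 := rfl
    have e2 : eps 2 = -1 := rfl
    have e3 : eps 3 = 1 := rfl
    rw [Fin.sum_univ_four, e0, e1, e2, e3]
    simp only [map_add, map_smul, map_neg, map_zero, LinearMap.add_apply,
      LinearMap.smul_apply, LinearMap.neg_apply, LinearMap.zero_apply,
      n00, n01, n02, n03, n10, n11, n12, n13, n20, n21, n22, n23, n30, n31, n32, n33]
    module
  -- compute tr V
  have htrV : tr V = 0 := by
    show (∑ i : Fin 4, eps i • (nabla (lie (nabla (e i) (b • (e 1 + e 2))) (b • (e 1 + e 2))) (e i)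
      - nabla (nabla (e i) (b • (e 1 + e 2))) (nabla (b • (e 1 + e 2)) (e i))
      + nabla (b • (e 1 + e 2)) (nabla (nabla (e i) (b • (e 1 + e 2))) (e i)))) = 0
    have e0 : eps 0 = 1 := rfl
    have e1 : eps 1 = 1 := rfl
    have e2 : eps 2 = -1 := rfl
    have e3 : eps 3 = 1 := rfl
    rw [Fin.sum_univ_four, e0, e1, e2, e3]
    simp only [map_add, map_smul, map_neg, map_zero, LinearMap.add_apply,
      LinearMap.smul_apply, LinearMap.neg_apply, LinearMap.zero_apply, smul_zero,
      n00, n01, n02, n03, n10, n11, n12, n13, n20, n21, n22, n23, n30, n31, n32, n33,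
      hlie0, h12, h13, h14, h23, h24, h34, h21, h31, h32, h41, h42, h43]
    module
  rw [hlapV, htrV]
  simp only [and_true]
  -- now pure algebra
  have hs : Real.sqrt 13 * Real.sqrt 13 = 13 := Real.mul_self_sqrt (by norm_num)
  constructor
  · intro h
    have h1 : b * (B^2 - 3*A*B - A^2) = 0 := by
      have := congrArg (fun x => e.repr x 1) h
      simpa [Finsupp.single_apply] using this
    have h2 : B^2 - 3*A*B - A^2 = 0 := by
      rcases mul_eq_zero.mp h1 with h' | h'
      · exact absurd h' hb
      · exact h'
    have h3 : (A - ((-3 + Real.sqrt 13) / 2) * B) * (A - ((-3 - Real.sqrt 13) / 2) * B) = 0 := by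
      linear_combination (-(B^2)/4) * hs - h2
    rcases mul_eq_zero.mp h3 with h' | h'
    · exact Or.inl (by linarith [sub_eq_zero.mp h'])
    · exact Or.inr (by linarith [sub_eq_zero.mp h'])
  · intro h
    have h2 : B^2 - 3*A*B - A^2 = 0 := by
      rcases h with h' | h' <;> rw [h'] <;> linear_combination (-(B^2)/4) * hs
    rw [h2]
    simp
end

section
/- For every left-invariant vector field V = a e₁ + b e₂ + c e₃ + d e₄ (a,b,c,d ∈ ℝ), one has ∇*∇V = ((A+D)² + 4B²)(c+d)(e₃ − e₄) and Σ_{i=1}^{4} εᵢ R(∇_{eᵢ}V, V)eᵢ = 0. Consequently, if (A+D)² + 4B² ≠ 0, then V defines a harmonic map (i.e., ∇*∇V = 0 and Σᵢ εᵢ R(∇_{eᵢ}V, V)eᵢ = 0) if and only if d = −c. -/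
set_option maxHeartbeats 4000000 in
theorem stmt_14 {G : Type*} [AddCommGroup G] [Module ℝ G]
    (u : Module.Basis (Fin 4) ℝ G)
    (lie : G →ₗ[ℝ] G →ₗ[ℝ] G)
    (g : G →ₗ[ℝ] G →ₗ[ℝ] ℝ)
    (nabla : G →ₗ[ℝ] G →ₗ[ℝ] G)
    (A B C D E ε : ℝ) (hε : ε = 1 ∨ ε = -1)
    (hanti : ∀ X Y : G, lie X Y = - lie Y X)
    (h12 : lie (u 0) (u 1) = (ε * Real.sqrt ((A + D) ^ 2 + 4 * B ^ 2)) • u 2)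
    (h13 : lie (u 0) (u 2) = 0)
    (h14 : lie (u 0) (u 3) = (-B) • u 0 + D • u 1 + E • u 2)
    (h23 : lie (u 1) (u 2) = 0)
    (h24 : lie (u 1) (u 3) = A • u 0 + B • u 1 + C • u 2)
    (h34 : lie (u 2) (u 3) = 0)
    (hg : ∀ i j : Fin 4, g (u i) (u j) =
      if (i = 0 ∧ j = 0) ∨ (i = 1 ∧ j = 1) ∨ (i = 2 ∧ j = 3) ∨ (i = 3 ∧ j = 2) then (1 : ℝ) else 0)
    (hgsymm : ∀ X Y : G, g X Y = g Y X)
    (hK : ∀ X Y Z : G, 2 * g (nabla X Y) Z = g (lie X Y) Z - g (lie Y Z) X + g (lie Z X) Y) :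
    (let eps : Fin 4 → ℝ := fun i => if i = (2 : Fin 4) then (-1 : ℝ) else 1
     let ef : Fin 4 → G := ![u 0, u 1, (-(1/2 : ℝ)) • u 2 + u 3, ((1/2 : ℝ)) • u 2 + u 3]
     let lap : G → G := fun V : G => ∑ i : Fin 4, eps i • (nabla (ef i) (nabla (ef i) V) - nabla (nabla (ef i) (ef i)) V)
     let tr : G → G := fun V : G => ∑ i : Fin 4, eps i • (nabla (lie (nabla (ef i) V) V) (ef i) - nabla (nabla (ef i) V) (nabla V (ef i)) + nabla V (nabla (nabla (ef i) V) (ef i)))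
     (∀ a b c d : ℝ,
        lap (a • ef 0 + b • ef 1 + c • ef 2 + d • ef 3)
            = (((A + D) ^ 2 + 4 * B ^ 2) * (c + d)) • (ef 2 - ef 3) ∧
        tr (a • ef 0 + b • ef 1 + c • ef 2 + d • ef 3) = 0) ∧
     ((A + D) ^ 2 + 4 * B ^ 2 ≠ 0 →
        ∀ a b c d : ℝ,
          ((lap (a • ef 0 + b • ef 1 + c • ef 2 + d • ef 3) = 0 ∧
            tr (a • ef 0 + b • ef 1 + c • ef 2 + d • ef 3) = 0) ↔ d = -c))) := by
  set k : ℝ := ε * Real.sqrt ((A + D) ^ 2 + 4 * B ^ 2) with hkdef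
  have hk2 : k ^ 2 = (A + D) ^ 2 + 4 * B ^ 2 := by
    have hnn : (0:ℝ) ≤ (A + D) ^ 2 + 4 * B ^ 2 := by positivity
    have hε2 : ε ^ 2 = 1 := by rcases hε with h | h <;> rw [h] <;> ring
    rw [hkdef, mul_pow, hε2, one_mul, sq, Real.mul_self_sqrt hnn]
  have hXX : ∀ X : G, lie X X = 0 := by
    intro X
    have h := hanti X X
    have h2 : (2:ℝ) • lie X X = 0 := by
      rw [two_smul]; nth_rewrite 2 [h]; abel
    have := smul_eq_zero.mp h2
    rcases this with h' | h'
    · norm_num at h'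
    · exact h'
  have l00 : lie (u 0) (u 0) = 0 := hXX (u 0)
  have l11 : lie (u 1) (u 1) = 0 := hXX (u 1)
  have l22 : lie (u 2) (u 2) = 0 := hXX (u 2)
  have l33 : lie (u 3) (u 3) = 0 := hXX (u 3)
  have l01 : lie (u 0) (u 1) = k • u 2 := h12
  have l10 : lie (u 1) (u 0) = (-k) • u 2 := by rw [hanti, h12]; module
  have l02 : lie (u 0) (u 2) = 0 := h13
  have l20 : lie (u 2) (u 0) = 0 := by rw [hanti, h13]; module
  have l12 : lie (u 1) (u 2) = 0 := h23
  have l21 : lie (u 2) (u 1) = 0 := by rw [hanti, h23]; module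
  have l23 : lie (u 2) (u 3) = 0 := h34
  have l32 : lie (u 3) (u 2) = 0 := by rw [hanti, h34]; module
  have l03 : lie (u 0) (u 3) = (-B) • u 0 + D • u 1 + E • u 2 := h14
  have l30 : lie (u 3) (u 0) = B • u 0 + (-D) • u 1 + (-E) • u 2 := by rw [hanti, h14]; module
  have l13 : lie (u 1) (u 3) = A • u 0 + B • u 1 + C • u 2 := h24
  have l31 : lie (u 3) (u 1) = (-A) • u 0 + (-B) • u 1 + (-C) • u 2 := by rw [hanti, h24]; module
  have hrec : ∀ w : G, w = g w (u 0) • u 0 + g w (u 1) • u 1 + g w (u 3) • u 2 + g w (u 2) • u 3 := by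
    have hid : (((g.flip (u 0)).smulRight (u 0) + (g.flip (u 1)).smulRight (u 1) +
        (g.flip (u 3)).smulRight (u 2) + (g.flip (u 2)).smulRight (u 3)) : G →ₗ[ℝ] G) = LinearMap.id := by
      apply Module.Basis.ext u
      intro i
      fin_cases i <;>
        simp [LinearMap.smulRight_apply, LinearMap.flip_apply, hg]
    intro w
    have := congrArg (fun f : G →ₗ[ℝ] G => f w) hid
    simp only [LinearMap.add_apply, LinearMap.smulRight_apply, LinearMap.flip_apply,
      LinearMap.id_apply] at this
    exact this.symm
  have hgn : ∀ X Y Z : G, g (nabla X Y) Z = (g (lie X Y) Z - g (lie Y Z) X + g (lie Z X) Y)/2 := by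
    intro X Y Z; have := hK X Y Z; linarith
  have n00 : nabla (u 0) (u 0) = B • u 2 := by
    rw [hrec (nabla (u 0) (u 0))]
    simp only [hgn, l00, l01, l02, l03, l10, l11, l12, l13, l20, l21, l22, l23, l30, l31, l32, l33, map_add, map_smul, map_zero, map_neg, LinearMap.add_apply,
      LinearMap.smul_apply, LinearMap.zero_apply, LinearMap.neg_apply, hg, Fin.isValue, Fin.reduceEq, reduceIte]
    first
      | module
      | (norm_num; module)
      | norm_num
  have n01 : nabla (u 0) (u 1) = ((k - A - D)/2) • u 2 := by
    rw [hrec (nabla (u 0) (u 1))]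
    simp only [hgn, l00, l01, l02, l03, l10, l11, l12, l13, l20, l21, l22, l23, l30, l31, l32, l33, map_add, map_smul, map_zero, map_neg, LinearMap.add_apply,
      LinearMap.smul_apply, LinearMap.zero_apply, LinearMap.neg_apply, hg, Fin.isValue, Fin.reduceEq, reduceIte]
    first
      | module
      | (norm_num; module)
      | norm_num
  have n02 : nabla (u 0) (u 2) = (0:G) := by
    rw [hrec (nabla (u 0) (u 2))]
    simp only [hgn, l00, l01, l02, l03, l10, l11, l12, l13, l20, l21, l22, l23, l30, l31, l32, l33, map_add, map_smul, map_zero, map_neg, LinearMap.add_apply,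
      LinearMap.smul_apply, LinearMap.zero_apply, LinearMap.neg_apply, hg, Fin.isValue, Fin.reduceEq, reduceIte]
    first
      | module
      | (norm_num; module)
      | norm_num
  have n12 : nabla (u 1) (u 2) = (0:G) := by
    rw [hrec (nabla (u 1) (u 2))]
    simp only [hgn, l00, l01, l02, l03, l10, l11, l12, l13, l20, l21, l22, l23, l30, l31, l32, l33, map_add, map_smul, map_zero, map_neg, LinearMap.add_apply,
      LinearMap.smul_apply, LinearMap.zero_apply, LinearMap.neg_apply, hg, Fin.isValue, Fin.reduceEq, reduceIte]
    first
      | module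
      | (norm_num; module)
      | norm_num
  have n20 : nabla (u 2) (u 0) = (0:G) := by
    rw [hrec (nabla (u 2) (u 0))]
    simp only [hgn, l00, l01, l02, l03, l10, l11, l12, l13, l20, l21, l22, l23, l30, l31, l32, l33, map_add, map_smul, map_zero, map_neg, LinearMap.add_apply,
      LinearMap.smul_apply, LinearMap.zero_apply, LinearMap.neg_apply, hg, Fin.isValue, Fin.reduceEq, reduceIte]
    first
      | module
      | (norm_num; module)
      | norm_num
  have n21 : nabla (u 2) (u 1) = (0:G) := by
    rw [hrec (nabla (u 2) (u 1))]
    simp only [hgn, l00, l01, l02, l03, l10, l11, l12, l13, l20, l21, l22, l23, l30, l31, l32, l33, map_add, map_smul, map_zero, map_neg, LinearMap.add_apply,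
      LinearMap.smul_apply, LinearMap.zero_apply, LinearMap.neg_apply, hg, Fin.isValue, Fin.reduceEq, reduceIte]
    first
      | module
      | (norm_num; module)
      | norm_num
  have n22 : nabla (u 2) (u 2) = (0:G) := by
    rw [hrec (nabla (u 2) (u 2))]
    simp only [hgn, l00, l01, l02, l03, l10, l11, l12, l13, l20, l21, l22, l23, l30, l31, l32, l33, map_add, map_smul, map_zero, map_neg, LinearMap.add_apply,
      LinearMap.smul_apply, LinearMap.zero_apply, LinearMap.neg_apply, hg, Fin.isValue, Fin.reduceEq, reduceIte]
    first
      | module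
      | (norm_num; module)
      | norm_num
  have n23 : nabla (u 2) (u 3) = (0:G) := by
    rw [hrec (nabla (u 2) (u 3))]
    simp only [hgn, l00, l01, l02, l03, l10, l11, l12, l13, l20, l21, l22, l23, l30, l31, l32, l33, map_add, map_smul, map_zero, map_neg, LinearMap.add_apply,
      LinearMap.smul_apply, LinearMap.zero_apply, LinearMap.neg_apply, hg, Fin.isValue, Fin.reduceEq, reduceIte]
    first
      | module
      | (norm_num; module)
      | norm_num
  have n32 : nabla (u 3) (u 2) = (0:G) := by
    rw [hrec (nabla (u 3) (u 2))]
    simp only [hgn, l00, l01, l02, l03, l10, l11, l12, l13, l20, l21, l22, l23, l30, l31, l32, l33, map_add, map_smul, map_zero, map_neg, LinearMap.add_apply,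
      LinearMap.smul_apply, LinearMap.zero_apply, LinearMap.neg_apply, hg, Fin.isValue, Fin.reduceEq, reduceIte]
    first
      | module
      | (norm_num; module)
      | norm_num
  have n03 : nabla (u 0) (u 3) = (-B) • u 0 + ((A + D - k)/2) • u 1 := by
    rw [hrec (nabla (u 0) (u 3))]
    simp only [hgn, l00, l01, l02, l03, l10, l11, l12, l13, l20, l21, l22, l23, l30, l31, l32, l33, map_add, map_smul, map_zero, map_neg, LinearMap.add_apply,
      LinearMap.smul_apply, LinearMap.zero_apply, LinearMap.neg_apply, hg, Fin.isValue, Fin.reduceEq, reduceIte]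
    first
      | module
      | (norm_num; module)
      | norm_num
  have n10 : nabla (u 1) (u 0) = ((-k - A - D)/2) • u 2 := by
    rw [hrec (nabla (u 1) (u 0))]
    simp only [hgn, l00, l01, l02, l03, l10, l11, l12, l13, l20, l21, l22, l23, l30, l31, l32, l33, map_add, map_smul, map_zero, map_neg, LinearMap.add_apply,
      LinearMap.smul_apply, LinearMap.zero_apply, LinearMap.neg_apply, hg, Fin.isValue, Fin.reduceEq, reduceIte]
    first
      | module
      | (norm_num; module)
      | norm_num
  have n11 : nabla (u 1) (u 1) = (-B) • u 2 := by
    rw [hrec (nabla (u 1) (u 1))]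
    simp only [hgn, l00, l01, l02, l03, l10, l11, l12, l13, l20, l21, l22, l23, l30, l31, l32, l33, map_add, map_smul, map_zero, map_neg, LinearMap.add_apply,
      LinearMap.smul_apply, LinearMap.zero_apply, LinearMap.neg_apply, hg, Fin.isValue, Fin.reduceEq, reduceIte]
    first
      | module
      | (norm_num; module)
      | norm_num
  have n13 : nabla (u 1) (u 3) = ((k + A + D)/2) • u 0 + B • u 1 := by
    rw [hrec (nabla (u 1) (u 3))]
    simp only [hgn, l00, l01, l02, l03, l10, l11, l12, l13, l20, l21, l22, l23, l30, l31, l32, l33, map_add, map_smul, map_zero, map_neg, LinearMap.add_apply,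
      LinearMap.smul_apply, LinearMap.zero_apply, LinearMap.neg_apply, hg, Fin.isValue, Fin.reduceEq, reduceIte]
    first
      | module
      | (norm_num; module)
      | norm_num
  have n30 : nabla (u 3) (u 0) = ((A - D - k)/2) • u 1 + (-E) • u 2 := by
    rw [hrec (nabla (u 3) (u 0))]
    simp only [hgn, l00, l01, l02, l03, l10, l11, l12, l13, l20, l21, l22, l23, l30, l31, l32, l33, map_add, map_smul, map_zero, map_neg, LinearMap.add_apply,
      LinearMap.smul_apply, LinearMap.zero_apply, LinearMap.neg_apply, hg, Fin.isValue, Fin.reduceEq, reduceIte]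
    first
      | module
      | (norm_num; module)
      | norm_num
  have n31 : nabla (u 3) (u 1) = ((k + D - A)/2) • u 0 + (-C) • u 2 := by
    rw [hrec (nabla (u 3) (u 1))]
    simp only [hgn, l00, l01, l02, l03, l10, l11, l12, l13, l20, l21, l22, l23, l30, l31, l32, l33, map_add, map_smul, map_zero, map_neg, LinearMap.add_apply,
      LinearMap.smul_apply, LinearMap.zero_apply, LinearMap.neg_apply, hg, Fin.isValue, Fin.reduceEq, reduceIte]
    first
      | module
      | (norm_num; module)
      | norm_num
  have n33 : nabla (u 3) (u 3) = E • u 0 + C • u 1 := by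
    rw [hrec (nabla (u 3) (u 3))]
    simp only [hgn, l00, l01, l02, l03, l10, l11, l12, l13, l20, l21, l22, l23, l30, l31, l32, l33, map_add, map_smul, map_zero, map_neg, LinearMap.add_apply,
      LinearMap.smul_apply, LinearMap.zero_apply, LinearMap.neg_apply, hg, Fin.isValue, Fin.reduceEq, reduceIte]
    first
      | module
      | (norm_num; module)
      | norm_num
  intro eps ef lap tr
  have he0 : ef 0 = u 0 := rfl
  have he1 : ef 1 = u 1 := rfl
  have he2 : ef 2 = (-(1/2 : ℝ)) • u 2 + u 3 := rfl
  have he3 : ef 3 = ((1/2 : ℝ)) • u 2 + u 3 := rfl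
  have hep0 : eps 0 = 1 := rfl
  have hep1 : eps 1 = 1 := rfl
  have hep2 : eps 2 = -1 := rfl
  have hep3 : eps 3 = 1 := rfl
  have key : ∀ a b c d : ℝ,
      lap (a • ef 0 + b • ef 1 + c • ef 2 + d • ef 3)
          = (((A + D) ^ 2 + 4 * B ^ 2) * (c + d)) • (ef 2 - ef 3) ∧
      tr (a • ef 0 + b • ef 1 + c • ef 2 + d • ef 3) = 0 := by
    intro a b c d
    constructor
    · show (∑ i : Fin 4, eps i • (nabla (ef i) (nabla (ef i) (a • ef 0 + b • ef 1 + c • ef 2 + d • ef 3)) - nabla (nabla (ef i) (ef i)) (a • ef 0 + b • ef 1 + c • ef 2 + d • ef 3))) = _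
      rw [Fin.sum_univ_four]
      simp only [hep0, hep1, hep2, hep3, he0, he1, he2, he3,
        map_add, map_smul, map_neg, map_sub, map_zero, LinearMap.add_apply,
        LinearMap.smul_apply, LinearMap.neg_apply, LinearMap.sub_apply, LinearMap.zero_apply,
        n00, n01, n02, n03, n10, n11, n12, n13, n20, n21, n22, n23, n30, n31, n32, n33, smul_add, smul_sub, smul_neg, smul_zero, smul_smul]
      match_scalars <;> first
        | ring1
        | linear_combination (-(c+d)/2) * hk2
    · show (∑ i : Fin 4, eps i • (nabla (lie (nabla (ef i) (a • ef 0 + b • ef 1 + c • ef 2 + d • ef 3)) (a • ef 0 + b • ef 1 + c • ef 2 + d • ef 3)) (ef i) - nabla (nabla (ef i) (a • ef 0 + b • ef 1 + c • ef 2 + d • ef 3)) (nabla (a • ef 0 + b • ef 1 + c • ef 2 + d • ef 3) (ef i)) + nabla (a • ef 0 + b • ef 1 + c • ef 2 + d • ef 3) (nabla (nabla (ef i) (a • ef 0 + b • ef 1 + c • ef 2 + d • ef 3)) (ef i)))) = 0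
      rw [Fin.sum_univ_four]
      simp only [hep0, hep1, hep2, hep3, he0, he1, he2, he3,
        map_add, map_smul, map_neg, map_sub, map_zero, LinearMap.add_apply,
        LinearMap.smul_apply, LinearMap.neg_apply, LinearMap.sub_apply, LinearMap.zero_apply,
        l00, l01, l02, l03, l10, l11, l12, l13, l20, l21, l22, l23, l30, l31, l32, l33, n00, n01, n02, n03, n10, n11, n12, n13, n20, n21, n22, n23, n30, n31, n32, n33, smul_add, smul_sub, smul_neg, smul_zero, smul_smul]
      match_scalars <;> ring1
  refine ⟨key, ?_⟩
  intro hne a b c d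
  have hu2 : u 2 ≠ 0 := u.ne_zero 2
  have hd : ef 2 - ef 3 = -u 2 := by rw [he2, he3]; module
  obtain ⟨k1, k2⟩ := key a b c d
  constructor
  · rintro ⟨hl, -⟩
    rw [k1, hd] at hl
    rcases smul_eq_zero.mp hl with h' | h'
    · rcases mul_eq_zero.mp h' with h'' | h''
      · exact absurd h'' hne
      · linarith
    · exact absurd (neg_eq_zero.mp h') hu2
  · intro hd'
    refine ⟨?_, k2⟩
    rw [k1, hd', ]
    norm_num
end

section
/- The light-like vector u = e₃ − e₄ (= −u₃) is parallel: ∇_X u = 0 for every X ∈ 𝔤, and ⟨u,u⟩ = 0. -/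
theorem stmt_15 {G : Type*} [AddCommGroup G] [Module ℝ G]
    (u : Module.Basis (Fin 4) ℝ G)
    (lie : G →ₗ[ℝ] G →ₗ[ℝ] G)
    (g : G →ₗ[ℝ] G →ₗ[ℝ] ℝ)
    (nabla : G →ₗ[ℝ] G →ₗ[ℝ] G)
    (A B C D E ε : ℝ) (hε : ε = 1 ∨ ε = -1)
    (hanti : ∀ X Y : G, lie X Y = - lie Y X)
    (h12 : lie (u 0) (u 1) = (ε * Real.sqrt ((A + D) ^ 2 + 4 * B ^ 2)) • u 2)
    (h13 : lie (u 0) (u 2) = 0)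
    (h14 : lie (u 0) (u 3) = (-B) • u 0 + D • u 1 + E • u 2)
    (h23 : lie (u 1) (u 2) = 0)
    (h24 : lie (u 1) (u 3) = A • u 0 + B • u 1 + C • u 2)
    (h34 : lie (u 2) (u 3) = 0)
    (hg : ∀ i j : Fin 4, g (u i) (u j) =
      if (i = 0 ∧ j = 0) ∨ (i = 1 ∧ j = 1) ∨ (i = 2 ∧ j = 3) ∨ (i = 3 ∧ j = 2) then (1 : ℝ) else 0)
    (hgsymm : ∀ X Y : G, g X Y = g Y X)
    (hK : ∀ X Y Z : G, 2 * g (nabla X Y) Z = g (lie X Y) Z - g (lie Y Z) X + g (lie Z X) Y) :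
    (let ef : Fin 4 → G := ![u 0, u 1, (-(1/2 : ℝ)) • u 2 + u 3, ((1/2 : ℝ)) • u 2 + u 3]
     let w : G := ef 2 - ef 3
     w = -(u 2) ∧ (∀ X : G, nabla X w = 0) ∧ g w w = 0) := by
  intro ef w
  have hw : w = -(u 2) := by
    show ((-(1/2 : ℝ)) • u 2 + u 3) - (((1/2 : ℝ)) • u 2 + u 3) = -(u 2)
    module
  have hself : ∀ X : G, lie X X = 0 := by
    intro X
    have h := hanti X X
    have h2 : (2 : ℝ) • lie X X = 0 := by
      rw [two_smul]; nth_rewrite 1 [h]; abel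
    rcases smul_eq_zero.mp h2 with h' | h'
    · norm_num at h'
    · exact h'
  have hA : ∀ X : G, lie X (u 2) = 0 := by
    have hz : lie.flip (u 2) = 0 := by
      apply Module.Basis.ext u
      intro i
      fin_cases i
      · exact h13
      · exact h23
      · exact hself (u 2)
      · show lie (u 3) (u 2) = 0
        rw [hanti, h34, neg_zero]
    intro X
    exact congrFun (congrArg DFunLike.coe hz) X
  have hB : ∀ Y : G, lie (u 2) Y = 0 := by
    intro Y; rw [hanti, hA, neg_zero]
  -- the 16 basis cases for g (lie (u i) (u j)) (u 2) = 0
  have k01 : g (lie (u 0) (u 1)) (u 2) = 0 := by rw [h12]; simp [hg]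
  have k03 : g (lie (u 0) (u 3)) (u 2) = 0 := by rw [h14]; simp [hg]
  have k13 : g (lie (u 1) (u 3)) (u 2) = 0 := by rw [h24]; simp [hg]
  have k10 : g (lie (u 1) (u 0)) (u 2) = 0 := by rw [hanti]; simp [k01]
  have k30 : g (lie (u 3) (u 0)) (u 2) = 0 := by rw [hanti]; simp [k03]
  have k31 : g (lie (u 3) (u 1)) (u 2) = 0 := by rw [hanti]; simp [k13]
  have z : ∀ V W : G, lie V W = 0 → g (lie V W) (u 2) = 0 := by
    intro V W h; rw [h]; simp
  have k00 := z _ _ (hself (u 0))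
  have k11 := z _ _ (hself (u 1))
  have k22 := z _ _ (hself (u 2))
  have k33 := z _ _ (hself (u 3))
  have k02 := z _ _ (hA (u 0))
  have k12 := z _ _ (hA (u 1))
  have k32 := z _ _ (hA (u 3))
  have k20 := z _ _ (hB (u 0))
  have k21 := z _ _ (hB (u 1))
  have k23 := z _ _ (hB (u 3))
  have hkey : ∀ i j : Fin 4, g (lie (u i) (u j)) (u 2) = 0 := by
    intro i j
    fin_cases i <;> fin_cases j <;>
      first
      | exact k00 | exact k01 | exact k02 | exact k03
      | exact k10 | exact k11 | exact k12 | exact k13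
      | exact k20 | exact k21 | exact k22 | exact k23
      | exact k30 | exact k31 | exact k32 | exact k33
  have hC : ∀ X Y : G, g (lie X Y) (u 2) = 0 := by
    have hz : lie.compr₂ (g.flip (u 2)) = 0 := by
      apply Module.Basis.ext u
      intro i
      apply Module.Basis.ext u
      intro j
      simpa [LinearMap.compr₂_apply, LinearMap.flip_apply] using hkey i j
    intro X Y
    have := congrFun (congrArg DFunLike.coe (congrFun (congrArg DFunLike.coe hz) X)) Y
    simpa [LinearMap.compr₂_apply, LinearMap.flip_apply] using this
  have hnd : ∀ V : G, (∀ j : Fin 4, g V (u j) = 0) → V = 0 := by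
    intro V hV
    have hrep : ∀ j : Fin 4, g V (u j) = ∑ i : Fin 4, u.repr V i * g (u i) (u j) := by
      intro j
      conv_lhs => rw [← u.sum_repr V]
      rw [map_sum, LinearMap.sum_apply]; simp only [map_smul, LinearMap.smul_apply, smul_eq_mul]
    have e0 := hV 0; rw [hrep 0] at e0
    have e1 := hV 1; rw [hrep 1] at e1
    have e2 := hV 3; rw [hrep 3] at e2
    have e3 := hV 2; rw [hrep 2] at e3
    simp [Fin.sum_univ_four, hg] at e0 e1 e2 e3
    apply u.ext_elem
    intro i
    simp only [map_zero, Finsupp.coe_zero, Pi.zero_apply]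
    fin_cases i
    · exact e0
    · exact e1
    · exact e2
    · exact e3
  have hnab : ∀ X : G, nabla X (u 2) = 0 := by
    intro X
    apply hnd
    intro j
    have h := hK X (u 2) (u j)
    rw [hA X, hB (u j), hC (u j) X] at h
    simp at h
    linarith
  refine ⟨hw, ?_, ?_⟩
  · intro X
    rw [hw]
    simp [hnab X]
  · rw [hw]
    simpa using hg 2 2
end

section
/- Suppose (A+B)² + C² ≠ 0. A left-invariant vector field V = a e₁ + b e₂ + c e₃ + d e₄ (a,b,c,d ∈ ℝ) defines a harmonic map (i.e., ∇*∇V = 0 and Σ_{i=1}^{4} εᵢ R(∇_{eᵢ}V, V)eᵢ = 0) if and only if d = −c. -/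
set_option maxHeartbeats 1000000 in

theorem stmt_16 {G : Type*} [AddCommGroup G] [Module ℝ G]
    (u : Module.Basis (Fin 4) ℝ G)
    (lie : G →ₗ[ℝ] G →ₗ[ℝ] G)
    (g : G →ₗ[ℝ] G →ₗ[ℝ] ℝ)
    (nabla : G →ₗ[ℝ] G →ₗ[ℝ] G)
    (A B C D E ε : ℝ) (hε : ε = 1 ∨ ε = -1)
    (hne : (A + B) ^ 2 + C ^ 2 ≠ 0)
    (hanti : ∀ X Y : G, lie X Y = - lie Y X)
    (h12 : lie (u 0) (u 1) = (ε * (A + B)) • u 2)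
    (h13 : lie (u 0) (u 2) = 0)
    (h14 : lie (u 0) (u 3) = C • u 0 + B • u 1 + D • u 2)
    (h23 : lie (u 1) (u 2) = 0)
    (h24 : lie (u 1) (u 3) = B • u 0 + E • u 2)
    (h34 : lie (u 2) (u 3) = C • u 2)
    (hg : ∀ i j : Fin 4, g (u i) (u j) =
      if (i = 0 ∧ j = 0) ∨ (i = 1 ∧ j = 1) ∨ (i = 2 ∧ j = 3) ∨ (i = 3 ∧ j = 2) then (1 : ℝ) else 0)
    (hgsymm : ∀ X Y : G, g X Y = g Y X)
    (hK : ∀ X Y Z : G, 2 * g (nabla X Y) Z = g (lie X Y) Z - g (lie Y Z) X + g (lie Z X) Y) :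
    (let eps : Fin 4 → ℝ := fun i => if i = (2 : Fin 4) then (-1 : ℝ) else 1
     let ef : Fin 4 → G := ![u 0, u 1, (-(1/2 : ℝ)) • u 2 + u 3, ((1/2 : ℝ)) • u 2 + u 3]
     let lap : G → G := fun V : G => ∑ i : Fin 4, eps i • (nabla (ef i) (nabla (ef i) V) - nabla (nabla (ef i) (ef i)) V)
     let tr : G → G := fun V : G => ∑ i : Fin 4, eps i • (nabla (lie (nabla (ef i) V) V) (ef i) - nabla (nabla (ef i) V) (nabla V (ef i)) + nabla V (nabla (nabla (ef i) V) (ef i)))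
     ∀ a b c d : ℝ,
       ((lap (a • ef 0 + b • ef 1 + c • ef 2 + d • ef 3) = 0 ∧
         tr (a • ef 0 + b • ef 1 + c • ef 2 + d • ef 3) = 0) ↔ d = -c)) := by
  have he2 : ε * ε = 1 := by rcases hε with h | h <;> rw [h] <;> norm_num
  have hXX : ∀ X : G, lie X X = 0 := by
    intro X
    have h2 : (2 : ℝ) • lie X X = 0 := by
      rw [two_smul]; nth_rewrite 2 [hanti X X]; exact add_neg_cancel _
    rcases smul_eq_zero.mp h2 with h | h
    · norm_num at h
    · exact h
  have h00 := hXX (u 0); have h11 := hXX (u 1); have h22 := hXX (u 2); have h33 := hXX (u 3)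
  have h21 : lie (u 1) (u 0) = -((ε * (A + B)) • u 2) := by rw [hanti, h12]
  have h31 : lie (u 2) (u 0) = 0 := by rw [hanti, h13, neg_zero]
  have h41 : lie (u 3) (u 0) = -(C • u 0 + B • u 1 + D • u 2) := by rw [hanti, h14]
  have h32 : lie (u 2) (u 1) = 0 := by rw [hanti, h23, neg_zero]
  have h42 : lie (u 3) (u 1) = -(B • u 0 + E • u 2) := by rw [hanti, h24]
  have h43 : lie (u 3) (u 2) = -(C • u 2) := by rw [hanti, h34]
  have hK' : ∀ X Y Z : G, g (nabla X Y) Z = (g (lie X Y) Z - g (lie Y Z) X + g (lie Z X) Y) / 2 := by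
    intro X Y Z; have := hK X Y Z; linarith
  have rep : ∀ W : G, W = g W (u 0) • u 0 + g W (u 1) • u 1 + g W (u 3) • u 2 + g W (u 2) • u 3 := by
    intro W
    have hW : W = u.repr W 0 • u 0 + u.repr W 1 • u 1 + u.repr W 2 • u 2 + u.repr W 3 • u 3 := by
      have h := Module.Basis.sum_repr u W
      rw [Fin.sum_univ_four] at h
      exact h.symm
    rw [hW]
    simp [map_add, map_smul, LinearMap.add_apply, LinearMap.smul_apply, hg, smul_eq_mul]
  have n00 : nabla (u 0) (u 0) = (-C) • u 2 := by
    rw [rep (nabla (u 0) (u 0))]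
    simp only [hK', h12, h13, h14, h23, h24, h34, h00, h11, h22, h33, h21, h31, h41, h32, h42, h43, map_add, map_smul, map_neg, map_zero, LinearMap.add_apply, LinearMap.smul_apply, LinearMap.neg_apply, LinearMap.zero_apply, hg, smul_eq_mul, Fin.isValue, Fin.reduceEq, and_true, true_and, and_false, false_and, or_true, true_or, or_false, false_or, and_self, or_self, ite_true, ite_false, reduceIte, mul_one, one_mul, mul_zero, zero_mul, add_zero, zero_add, neg_zero, neg_neg, sub_zero, zero_sub, zero_div]
    module
  have n01 : nabla (u 0) (u 1) = (ε * (A + B) / 2 - B) • u 2 := by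
    rw [rep (nabla (u 0) (u 1))]
    simp only [hK', h12, h13, h14, h23, h24, h34, h00, h11, h22, h33, h21, h31, h41, h32, h42, h43, map_add, map_smul, map_neg, map_zero, LinearMap.add_apply, LinearMap.smul_apply, LinearMap.neg_apply, LinearMap.zero_apply, hg, smul_eq_mul, Fin.isValue, Fin.reduceEq, and_true, true_and, and_false, false_and, or_true, true_or, or_false, false_or, and_self, or_self, ite_true, ite_false, reduceIte, mul_one, one_mul, mul_zero, zero_mul, add_zero, zero_add, neg_zero, neg_neg, sub_zero, zero_sub, zero_div]
    module
  have n02 : nabla (u 0) (u 2) = (0 : G) := by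
    rw [rep (nabla (u 0) (u 2))]
    simp only [hK', h12, h13, h14, h23, h24, h34, h00, h11, h22, h33, h21, h31, h41, h32, h42, h43, map_add, map_smul, map_neg, map_zero, LinearMap.add_apply, LinearMap.smul_apply, LinearMap.neg_apply, LinearMap.zero_apply, hg, smul_eq_mul, Fin.isValue, Fin.reduceEq, and_true, true_and, and_false, false_and, or_true, true_or, or_false, false_or, and_self, or_self, ite_true, ite_false, reduceIte, mul_one, one_mul, mul_zero, zero_mul, add_zero, zero_add, neg_zero, neg_neg, sub_zero, zero_sub, zero_div]
    module
  have n03 : nabla (u 0) (u 3) = C • u 0 + (B - ε * (A + B) / 2) • u 1 := by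
    rw [rep (nabla (u 0) (u 3))]
    simp only [hK', h12, h13, h14, h23, h24, h34, h00, h11, h22, h33, h21, h31, h41, h32, h42, h43, map_add, map_smul, map_neg, map_zero, LinearMap.add_apply, LinearMap.smul_apply, LinearMap.neg_apply, LinearMap.zero_apply, hg, smul_eq_mul, Fin.isValue, Fin.reduceEq, and_true, true_and, and_false, false_and, or_true, true_or, or_false, false_or, and_self, or_self, ite_true, ite_false, reduceIte, mul_one, one_mul, mul_zero, zero_mul, add_zero, zero_add, neg_zero, neg_neg, sub_zero, zero_sub, zero_div]
    module
  have n10 : nabla (u 1) (u 0) = (-B - ε * (A + B) / 2) • u 2 := by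
    rw [rep (nabla (u 1) (u 0))]
    simp only [hK', h12, h13, h14, h23, h24, h34, h00, h11, h22, h33, h21, h31, h41, h32, h42, h43, map_add, map_smul, map_neg, map_zero, LinearMap.add_apply, LinearMap.smul_apply, LinearMap.neg_apply, LinearMap.zero_apply, hg, smul_eq_mul, Fin.isValue, Fin.reduceEq, and_true, true_and, and_false, false_and, or_true, true_or, or_false, false_or, and_self, or_self, ite_true, ite_false, reduceIte, mul_one, one_mul, mul_zero, zero_mul, add_zero, zero_add, neg_zero, neg_neg, sub_zero, zero_sub, zero_div]
    module
  have n11 : nabla (u 1) (u 1) = (0 : G) := by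
    rw [rep (nabla (u 1) (u 1))]
    simp only [hK', h12, h13, h14, h23, h24, h34, h00, h11, h22, h33, h21, h31, h41, h32, h42, h43, map_add, map_smul, map_neg, map_zero, LinearMap.add_apply, LinearMap.smul_apply, LinearMap.neg_apply, LinearMap.zero_apply, hg, smul_eq_mul, Fin.isValue, Fin.reduceEq, and_true, true_and, and_false, false_and, or_true, true_or, or_false, false_or, and_self, or_self, ite_true, ite_false, reduceIte, mul_one, one_mul, mul_zero, zero_mul, add_zero, zero_add, neg_zero, neg_neg, sub_zero, zero_sub, zero_div]
    module
  have n12 : nabla (u 1) (u 2) = (0 : G) := by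
    rw [rep (nabla (u 1) (u 2))]
    simp only [hK', h12, h13, h14, h23, h24, h34, h00, h11, h22, h33, h21, h31, h41, h32, h42, h43, map_add, map_smul, map_neg, map_zero, LinearMap.add_apply, LinearMap.smul_apply, LinearMap.neg_apply, LinearMap.zero_apply, hg, smul_eq_mul, Fin.isValue, Fin.reduceEq, and_true, true_and, and_false, false_and, or_true, true_or, or_false, false_or, and_self, or_self, ite_true, ite_false, reduceIte, mul_one, one_mul, mul_zero, zero_mul, add_zero, zero_add, neg_zero, neg_neg, sub_zero, zero_sub, zero_div]
    module
  have n13 : nabla (u 1) (u 3) = (B + ε * (A + B) / 2) • u 0 := by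
    rw [rep (nabla (u 1) (u 3))]
    simp only [hK', h12, h13, h14, h23, h24, h34, h00, h11, h22, h33, h21, h31, h41, h32, h42, h43, map_add, map_smul, map_neg, map_zero, LinearMap.add_apply, LinearMap.smul_apply, LinearMap.neg_apply, LinearMap.zero_apply, hg, smul_eq_mul, Fin.isValue, Fin.reduceEq, and_true, true_and, and_false, false_and, or_true, true_or, or_false, false_or, and_self, or_self, ite_true, ite_false, reduceIte, mul_one, one_mul, mul_zero, zero_mul, add_zero, zero_add, neg_zero, neg_neg, sub_zero, zero_sub, zero_div]
    module
  have n20 : nabla (u 2) (u 0) = (0 : G) := by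
    rw [rep (nabla (u 2) (u 0))]
    simp only [hK', h12, h13, h14, h23, h24, h34, h00, h11, h22, h33, h21, h31, h41, h32, h42, h43, map_add, map_smul, map_neg, map_zero, LinearMap.add_apply, LinearMap.smul_apply, LinearMap.neg_apply, LinearMap.zero_apply, hg, smul_eq_mul, Fin.isValue, Fin.reduceEq, and_true, true_and, and_false, false_and, or_true, true_or, or_false, false_or, and_self, or_self, ite_true, ite_false, reduceIte, mul_one, one_mul, mul_zero, zero_mul, add_zero, zero_add, neg_zero, neg_neg, sub_zero, zero_sub, zero_div]
    module
  have n21 : nabla (u 2) (u 1) = (0 : G) := by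
    rw [rep (nabla (u 2) (u 1))]
    simp only [hK', h12, h13, h14, h23, h24, h34, h00, h11, h22, h33, h21, h31, h41, h32, h42, h43, map_add, map_smul, map_neg, map_zero, LinearMap.add_apply, LinearMap.smul_apply, LinearMap.neg_apply, LinearMap.zero_apply, hg, smul_eq_mul, Fin.isValue, Fin.reduceEq, and_true, true_and, and_false, false_and, or_true, true_or, or_false, false_or, and_self, or_self, ite_true, ite_false, reduceIte, mul_one, one_mul, mul_zero, zero_mul, add_zero, zero_add, neg_zero, neg_neg, sub_zero, zero_sub, zero_div]
    module
  have n22 : nabla (u 2) (u 2) = (0 : G) := by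
    rw [rep (nabla (u 2) (u 2))]
    simp only [hK', h12, h13, h14, h23, h24, h34, h00, h11, h22, h33, h21, h31, h41, h32, h42, h43, map_add, map_smul, map_neg, map_zero, LinearMap.add_apply, LinearMap.smul_apply, LinearMap.neg_apply, LinearMap.zero_apply, hg, smul_eq_mul, Fin.isValue, Fin.reduceEq, and_true, true_and, and_false, false_and, or_true, true_or, or_false, false_or, and_self, or_self, ite_true, ite_false, reduceIte, mul_one, one_mul, mul_zero, zero_mul, add_zero, zero_add, neg_zero, neg_neg, sub_zero, zero_sub, zero_div]
    module
  have n23 : nabla (u 2) (u 3) = (0 : G) := by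
    rw [rep (nabla (u 2) (u 3))]
    simp only [hK', h12, h13, h14, h23, h24, h34, h00, h11, h22, h33, h21, h31, h41, h32, h42, h43, map_add, map_smul, map_neg, map_zero, LinearMap.add_apply, LinearMap.smul_apply, LinearMap.neg_apply, LinearMap.zero_apply, hg, smul_eq_mul, Fin.isValue, Fin.reduceEq, and_true, true_and, and_false, false_and, or_true, true_or, or_false, false_or, and_self, or_self, ite_true, ite_false, reduceIte, mul_one, one_mul, mul_zero, zero_mul, add_zero, zero_add, neg_zero, neg_neg, sub_zero, zero_sub, zero_div]
    module
  have n30 : nabla (u 3) (u 0) = (-(ε * (A + B) / 2)) • u 1 + (-D) • u 2 := by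
    rw [rep (nabla (u 3) (u 0))]
    simp only [hK', h12, h13, h14, h23, h24, h34, h00, h11, h22, h33, h21, h31, h41, h32, h42, h43, map_add, map_smul, map_neg, map_zero, LinearMap.add_apply, LinearMap.smul_apply, LinearMap.neg_apply, LinearMap.zero_apply, hg, smul_eq_mul, Fin.isValue, Fin.reduceEq, and_true, true_and, and_false, false_and, or_true, true_or, or_false, false_or, and_self, or_self, ite_true, ite_false, reduceIte, mul_one, one_mul, mul_zero, zero_mul, add_zero, zero_add, neg_zero, neg_neg, sub_zero, zero_sub, zero_div]
    module
  have n31 : nabla (u 3) (u 1) = (ε * (A + B) / 2) • u 0 + (-E) • u 2 := by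
    rw [rep (nabla (u 3) (u 1))]
    simp only [hK', h12, h13, h14, h23, h24, h34, h00, h11, h22, h33, h21, h31, h41, h32, h42, h43, map_add, map_smul, map_neg, map_zero, LinearMap.add_apply, LinearMap.smul_apply, LinearMap.neg_apply, LinearMap.zero_apply, hg, smul_eq_mul, Fin.isValue, Fin.reduceEq, and_true, true_and, and_false, false_and, or_true, true_or, or_false, false_or, and_self, or_self, ite_true, ite_false, reduceIte, mul_one, one_mul, mul_zero, zero_mul, add_zero, zero_add, neg_zero, neg_neg, sub_zero, zero_sub, zero_div]
    module
  have n32 : nabla (u 3) (u 2) = (-C) • u 2 := by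
    rw [rep (nabla (u 3) (u 2))]
    simp only [hK', h12, h13, h14, h23, h24, h34, h00, h11, h22, h33, h21, h31, h41, h32, h42, h43, map_add, map_smul, map_neg, map_zero, LinearMap.add_apply, LinearMap.smul_apply, LinearMap.neg_apply, LinearMap.zero_apply, hg, smul_eq_mul, Fin.isValue, Fin.reduceEq, and_true, true_and, and_false, false_and, or_true, true_or, or_false, false_or, and_self, or_self, ite_true, ite_false, reduceIte, mul_one, one_mul, mul_zero, zero_mul, add_zero, zero_add, neg_zero, neg_neg, sub_zero, zero_sub, zero_div]
    module
  have n33 : nabla (u 3) (u 3) = D • u 0 + E • u 1 + C • u 3 := by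
    rw [rep (nabla (u 3) (u 3))]
    simp only [hK', h12, h13, h14, h23, h24, h34, h00, h11, h22, h33, h21, h31, h41, h32, h42, h43, map_add, map_smul, map_neg, map_zero, LinearMap.add_apply, LinearMap.smul_apply, LinearMap.neg_apply, LinearMap.zero_apply, hg, smul_eq_mul, Fin.isValue, Fin.reduceEq, and_true, true_and, and_false, false_and, or_true, true_or, or_false, false_or, and_self, or_self, ite_true, ite_false, reduceIte, mul_one, one_mul, mul_zero, zero_mul, add_zero, zero_add, neg_zero, neg_neg, sub_zero, zero_sub, zero_div]
    module
  intro eps ef lap tr a b c d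
  have heps0 : eps 0 = 1 := rfl
  have heps1 : eps 1 = 1 := rfl
  have heps2 : eps 2 = -1 := rfl
  have heps3 : eps 3 = 1 := rfl
  have hef0 : ef 0 = u 0 := rfl
  have hef1 : ef 1 = u 1 := rfl
  have hef2 : ef 2 = (-(1/2 : ℝ)) • u 2 + u 3 := rfl
  have hef3 : ef 3 = ((1/2 : ℝ)) • u 2 + u 3 := rfl
  have hld : ∀ V : G, lap V = ∑ i : Fin 4, eps i • (nabla (ef i) (nabla (ef i) V) - nabla (nabla (ef i) (ef i)) V) := fun V => rfl
  have htd : ∀ V : G, tr V = ∑ i : Fin 4, eps i • (nabla (lie (nabla (ef i) V) V) (ef i) - nabla (nabla (ef i) V) (nabla V (ef i)) + nabla V (nabla (nabla (ef i) V) (ef i))) := fun V => rfl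
  have hlapV : lap (a • ef 0 + b • ef 1 + c • ef 2 + d • ef 3) =
      (-((c + d) * (C ^ 2 + 2 * B ^ 2) + (c + d) * (ε * ε) * (A + B) ^ 2 / 2)) • u 2 := by
    rw [hld, Fin.sum_univ_four]
    simp only [heps0, heps1, heps2, heps3, hef0, hef1, hef2, hef3]
    simp only [map_add, map_smul, map_sub, map_neg, map_zero, LinearMap.add_apply,
      LinearMap.smul_apply, LinearMap.neg_apply, LinearMap.zero_apply,
      n00, n01, n02, n03, n10, n11, n12, n13, n20, n21, n22, n23, n30, n31, n32, n33,
      smul_add, smul_sub, smul_neg, smul_zero, zero_smul, smul_smul, add_zero, zero_add,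
      neg_zero, sub_zero, zero_sub]
    match_scalars <;> ring
  have htrV : tr (a • ef 0 + b • ef 1 + c • ef 2 + d • ef 3) =
      (C * (c + d) ^ 2 * ((ε * ε) * (A + B) ^ 2 / 4 - B ^ 2)) • u 2 := by
    rw [htd, Fin.sum_univ_four]
    simp only [heps0, heps1, heps2, heps3, hef0, hef1, hef2, hef3]
    simp only [map_add, map_smul, map_sub, map_neg, map_zero, LinearMap.add_apply,
      LinearMap.smul_apply, LinearMap.neg_apply, LinearMap.zero_apply,
      n00, n01, n02, n03, n10, n11, n12, n13, n20, n21, n22, n23, n30, n31, n32, n33,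
      h12, h13, h14, h23, h24, h34, h00, h11, h22, h33, h21, h31, h41, h32, h42, h43,
      smul_add, smul_sub, smul_neg, smul_zero, zero_smul, smul_smul, add_zero, zero_add,
      neg_zero, sub_zero, zero_sub]
    match_scalars <;> ring
  have hu2 : (u 2 : G) ≠ 0 := u.ne_zero 2
  have hpos : C ^ 2 + 2 * B ^ 2 + (A + B) ^ 2 / 2 > 0 := by
    have h1 : (A + B) ^ 2 + C ^ 2 > 0 := lt_of_le_of_ne (by positivity) (Ne.symm hne)
    nlinarith [sq_nonneg (A + B), sq_nonneg B, sq_nonneg C]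
  constructor
  · rintro ⟨hl, -⟩
    rw [hlapV] at hl
    rcases smul_eq_zero.mp hl with h | h
    · have hcd : (c + d) * (C ^ 2 + 2 * B ^ 2 + (A + B) ^ 2 / 2) = 0 := by
        linear_combination -h - ((c + d) * (A + B) ^ 2 / 2) * he2
      rcases mul_eq_zero.mp hcd with h2 | h2
      · linarith
      · linarith
    · exact absurd h hu2
  · intro hd
    have hcd : c + d = 0 := by rw [hd]; ring
    constructor
    · rw [hlapV]
      have hz : -((c + d) * (C ^ 2 + 2 * B ^ 2) + (c + d) * (ε * ε) * (A + B) ^ 2 / 2) = 0 := by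
        rw [hcd]; ring
      rw [hz, zero_smul]
    · rw [htrV]
      have hz : C * (c + d) ^ 2 * ((ε * ε) * (A + B) ^ 2 / 4 - B ^ 2) = 0 := by
        rw [hcd]; ring
      rw [hz, zero_smul]
end

section
/- A left-invariant vector field V = a e₁ + b e₂ + c e₃ + d e₄ (a,b,c,d ∈ ℝ) defines a harmonic map (i.e., ∇*∇V = 0 and Σ_{i=1}^{4} εᵢ R(∇_{eᵢ}V, V)eᵢ = 0) if and only if c = −d. -/
set_option maxHeartbeats 4000000 in
theorem stmt_18 {G : Type*} [AddCommGroup G] [Module ℝ G]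
    (u : Module.Basis (Fin 4) ℝ G)
    (lie : G →ₗ[ℝ] G →ₗ[ℝ] G)
    (g : G →ₗ[ℝ] G →ₗ[ℝ] ℝ)
    (nabla : G →ₗ[ℝ] G →ₗ[ℝ] G)
    (A B C D E F : ℝ) (hEA : E + A ≠ 0)
    (hanti : ∀ X Y : G, lie X Y = - lie Y X)
    (h12 : lie (u 0) (u 1) = 0)
    (h13 : lie (u 0) (u 2) = 0)
    (h14 : lie (u 0) (u 3) = A • u 0 + B • u 1 + C • u 2)
    (h23 : lie (u 1) (u 2) = 0)
    (h24 : lie (u 1) (u 3) = D • u 0 + E • u 1 + F • u 2)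
    (h34 : lie (u 2) (u 3) = (((B + D) ^ 2 + 2 * (A ^ 2 + E ^ 2)) / (2 * (E + A))) • u 2)
    (hg : ∀ i j : Fin 4, g (u i) (u j) =
      if (i = 0 ∧ j = 0) ∨ (i = 1 ∧ j = 1) ∨ (i = 2 ∧ j = 3) ∨ (i = 3 ∧ j = 2) then (1 : ℝ) else 0)
    (hgsymm : ∀ X Y : G, g X Y = g Y X)
    (hK : ∀ X Y Z : G, 2 * g (nabla X Y) Z = g (lie X Y) Z - g (lie Y Z) X + g (lie Z X) Y) :
    (let eps : Fin 4 → ℝ := fun i => if i = (2 : Fin 4) then (-1 : ℝ) else 1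
     let ef : Fin 4 → G := ![u 0, u 1, (-(1/2 : ℝ)) • u 2 + u 3, ((1/2 : ℝ)) • u 2 + u 3]
     let lap : G → G := fun V : G => ∑ i : Fin 4, eps i • (nabla (ef i) (nabla (ef i) V) - nabla (nabla (ef i) (ef i)) V)
     let tr : G → G := fun V : G => ∑ i : Fin 4, eps i • (nabla (lie (nabla (ef i) V) V) (ef i) - nabla (nabla (ef i) V) (nabla V (ef i)) + nabla V (nabla (nabla (ef i) V) (ef i)))
     ∀ a b c d : ℝ,
       ((lap (a • ef 0 + b • ef 1 + c • ef 2 + d • ef 3) = 0 ∧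
         tr (a • ef 0 + b • ef 1 + c • ef 2 + d • ef 3) = 0) ↔ c = -d)) := by

  set L : ℝ := ((B + D) ^ 2 + 2 * (A ^ 2 + E ^ 2)) / (2 * (E + A)) with hL
  clear_value L
  have hself : ∀ X : G, lie X X = 0 := by
    intro X
    have h := hanti X X
    have h2 : (2:ℝ) • lie X X = 0 := by
      rw [two_smul]; nth_rewrite 1 [h]; exact neg_add_cancel _
    have h3 : lie X X = (2:ℝ)⁻¹ • ((2:ℝ) • lie X X) := by
      rw [smul_smul]; norm_num
    rw [h2, smul_zero] at h3; exact h3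
  have hrep : ∀ w : G, w = g w (u 0) • u 0 + g w (u 1) • u 1 + g w (u 3) • u 2 + g w (u 2) • u 3 := by
    intro w
    conv_lhs => rw [← u.sum_repr w]
    conv_rhs => rw [← u.sum_repr w]
    simp [Fin.sum_univ_four, map_add, map_smul, LinearMap.add_apply, LinearMap.smul_apply, hg, -Module.Basis.sum_repr]
  have gcoef : ∀ X Y Z : G, g (nabla X Y) Z = (g (lie X Y) Z - g (lie Y Z) X + g (lie Z X) Y)/2 := by
    intro X Y Z
    have := hK X Y Z
    linarith
  have l00 : lie (u 0) (u 0) = 0 := hself _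
  have l01 : lie (u 0) (u 1) = 0 := h12
  have l02 : lie (u 0) (u 2) = 0 := h13
  have l03 : lie (u 0) (u 3) = A • u 0 + B • u 1 + C • u 2 := h14
  have l10 : lie (u 1) (u 0) = 0 := by rw [hanti, h12, neg_zero]
  have l11 : lie (u 1) (u 1) = 0 := hself _
  have l12 : lie (u 1) (u 2) = 0 := h23
  have l13 : lie (u 1) (u 3) = D • u 0 + E • u 1 + F • u 2 := h24
  have l20 : lie (u 2) (u 0) = 0 := by rw [hanti, h13, neg_zero]
  have l21 : lie (u 2) (u 1) = 0 := by rw [hanti, h23, neg_zero]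
  have l22 : lie (u 2) (u 2) = 0 := hself _
  have l23 : lie (u 2) (u 3) = L • u 2 := h34
  have l30 : lie (u 3) (u 0) = -(A • u 0 + B • u 1 + C • u 2) := by rw [hanti, h14]
  have l31 : lie (u 3) (u 1) = -(D • u 0 + E • u 1 + F • u 2) := by rw [hanti, h24]
  have l32 : lie (u 3) (u 2) = -(L • u 2) := by rw [hanti, h34]
  have l33 : lie (u 3) (u 3) = 0 := hself _
  have n00 : nabla (u 0) (u 0) = (-A) • u 2 := by
    rw [hrep (nabla (u 0) (u 0)), gcoef, gcoef, gcoef, gcoef]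
    simp only [l00, l01, l02, l03, l10, l11, l12, l13, l20, l21, l22, l23, l30, l31, l32, l33, map_add, map_smul, map_neg, map_zero, LinearMap.add_apply, LinearMap.smul_apply, LinearMap.neg_apply, LinearMap.zero_apply, hg, smul_eq_mul, Fin.reduceEq, Fin.isValue, reduceIte]
    norm_num
    try module
  have n01 : nabla (u 0) (u 1) = (-((B+D)/2)) • u 2 := by
    rw [hrep (nabla (u 0) (u 1)), gcoef, gcoef, gcoef, gcoef]
    simp only [l00, l01, l02, l03, l10, l11, l12, l13, l20, l21, l22, l23, l30, l31, l32, l33, map_add, map_smul, map_neg, map_zero, LinearMap.add_apply, LinearMap.smul_apply, LinearMap.neg_apply, LinearMap.zero_apply, hg, smul_eq_mul, Fin.reduceEq, Fin.isValue, reduceIte]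
    norm_num
    try module
  have n02 : nabla (u 0) (u 2) = (0:G) := by
    rw [hrep (nabla (u 0) (u 2)), gcoef, gcoef, gcoef, gcoef]
    simp only [l00, l01, l02, l03, l10, l11, l12, l13, l20, l21, l22, l23, l30, l31, l32, l33, map_add, map_smul, map_neg, map_zero, LinearMap.add_apply, LinearMap.smul_apply, LinearMap.neg_apply, LinearMap.zero_apply, hg, smul_eq_mul, Fin.reduceEq, Fin.isValue, reduceIte]
    norm_num
    try module
  have n03 : nabla (u 0) (u 3) = A • u 0 + ((B+D)/2) • u 1 := by
    rw [hrep (nabla (u 0) (u 3)), gcoef, gcoef, gcoef, gcoef]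
    simp only [l00, l01, l02, l03, l10, l11, l12, l13, l20, l21, l22, l23, l30, l31, l32, l33, map_add, map_smul, map_neg, map_zero, LinearMap.add_apply, LinearMap.smul_apply, LinearMap.neg_apply, LinearMap.zero_apply, hg, smul_eq_mul, Fin.reduceEq, Fin.isValue, reduceIte]
    norm_num
    try module
  have n10 : nabla (u 1) (u 0) = (-((B+D)/2)) • u 2 := by
    rw [hrep (nabla (u 1) (u 0)), gcoef, gcoef, gcoef, gcoef]
    simp only [l00, l01, l02, l03, l10, l11, l12, l13, l20, l21, l22, l23, l30, l31, l32, l33, map_add, map_smul, map_neg, map_zero, LinearMap.add_apply, LinearMap.smul_apply, LinearMap.neg_apply, LinearMap.zero_apply, hg, smul_eq_mul, Fin.reduceEq, Fin.isValue, reduceIte]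
    norm_num
    try module
  have n11 : nabla (u 1) (u 1) = (-E) • u 2 := by
    rw [hrep (nabla (u 1) (u 1)), gcoef, gcoef, gcoef, gcoef]
    simp only [l00, l01, l02, l03, l10, l11, l12, l13, l20, l21, l22, l23, l30, l31, l32, l33, map_add, map_smul, map_neg, map_zero, LinearMap.add_apply, LinearMap.smul_apply, LinearMap.neg_apply, LinearMap.zero_apply, hg, smul_eq_mul, Fin.reduceEq, Fin.isValue, reduceIte]
    norm_num
    try module
  have n12 : nabla (u 1) (u 2) = (0:G) := by
    rw [hrep (nabla (u 1) (u 2)), gcoef, gcoef, gcoef, gcoef]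
    simp only [l00, l01, l02, l03, l10, l11, l12, l13, l20, l21, l22, l23, l30, l31, l32, l33, map_add, map_smul, map_neg, map_zero, LinearMap.add_apply, LinearMap.smul_apply, LinearMap.neg_apply, LinearMap.zero_apply, hg, smul_eq_mul, Fin.reduceEq, Fin.isValue, reduceIte]
    norm_num
    try module
  have n13 : nabla (u 1) (u 3) = ((B+D)/2) • u 0 + E • u 1 := by
    rw [hrep (nabla (u 1) (u 3)), gcoef, gcoef, gcoef, gcoef]
    simp only [l00, l01, l02, l03, l10, l11, l12, l13, l20, l21, l22, l23, l30, l31, l32, l33, map_add, map_smul, map_neg, map_zero, LinearMap.add_apply, LinearMap.smul_apply, LinearMap.neg_apply, LinearMap.zero_apply, hg, smul_eq_mul, Fin.reduceEq, Fin.isValue, reduceIte]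
    norm_num
    try module
  have n20 : nabla (u 2) (u 0) = (0:G) := by
    rw [hrep (nabla (u 2) (u 0)), gcoef, gcoef, gcoef, gcoef]
    simp only [l00, l01, l02, l03, l10, l11, l12, l13, l20, l21, l22, l23, l30, l31, l32, l33, map_add, map_smul, map_neg, map_zero, LinearMap.add_apply, LinearMap.smul_apply, LinearMap.neg_apply, LinearMap.zero_apply, hg, smul_eq_mul, Fin.reduceEq, Fin.isValue, reduceIte]
    norm_num
    try module
  have n21 : nabla (u 2) (u 1) = (0:G) := by
    rw [hrep (nabla (u 2) (u 1)), gcoef, gcoef, gcoef, gcoef]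
    simp only [l00, l01, l02, l03, l10, l11, l12, l13, l20, l21, l22, l23, l30, l31, l32, l33, map_add, map_smul, map_neg, map_zero, LinearMap.add_apply, LinearMap.smul_apply, LinearMap.neg_apply, LinearMap.zero_apply, hg, smul_eq_mul, Fin.reduceEq, Fin.isValue, reduceIte]
    norm_num
    try module
  have n22 : nabla (u 2) (u 2) = (0:G) := by
    rw [hrep (nabla (u 2) (u 2)), gcoef, gcoef, gcoef, gcoef]
    simp only [l00, l01, l02, l03, l10, l11, l12, l13, l20, l21, l22, l23, l30, l31, l32, l33, map_add, map_smul, map_neg, map_zero, LinearMap.add_apply, LinearMap.smul_apply, LinearMap.neg_apply, LinearMap.zero_apply, hg, smul_eq_mul, Fin.reduceEq, Fin.isValue, reduceIte]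
    norm_num
    try module
  have n23 : nabla (u 2) (u 3) = (0:G) := by
    rw [hrep (nabla (u 2) (u 3)), gcoef, gcoef, gcoef, gcoef]
    simp only [l00, l01, l02, l03, l10, l11, l12, l13, l20, l21, l22, l23, l30, l31, l32, l33, map_add, map_smul, map_neg, map_zero, LinearMap.add_apply, LinearMap.smul_apply, LinearMap.neg_apply, LinearMap.zero_apply, hg, smul_eq_mul, Fin.reduceEq, Fin.isValue, reduceIte]
    norm_num
    try module
  have n30 : nabla (u 3) (u 0) = ((D-B)/2) • u 1 + (-C) • u 2 := by
    rw [hrep (nabla (u 3) (u 0)), gcoef, gcoef, gcoef, gcoef]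
    simp only [l00, l01, l02, l03, l10, l11, l12, l13, l20, l21, l22, l23, l30, l31, l32, l33, map_add, map_smul, map_neg, map_zero, LinearMap.add_apply, LinearMap.smul_apply, LinearMap.neg_apply, LinearMap.zero_apply, hg, smul_eq_mul, Fin.reduceEq, Fin.isValue, reduceIte]
    norm_num
    try module
  have n31 : nabla (u 3) (u 1) = ((B-D)/2) • u 0 + (-F) • u 2 := by
    rw [hrep (nabla (u 3) (u 1)), gcoef, gcoef, gcoef, gcoef]
    simp only [l00, l01, l02, l03, l10, l11, l12, l13, l20, l21, l22, l23, l30, l31, l32, l33, map_add, map_smul, map_neg, map_zero, LinearMap.add_apply, LinearMap.smul_apply, LinearMap.neg_apply, LinearMap.zero_apply, hg, smul_eq_mul, Fin.reduceEq, Fin.isValue, reduceIte]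
    norm_num
    try module
  have n32 : nabla (u 3) (u 2) = (-L) • u 2 := by
    rw [hrep (nabla (u 3) (u 2)), gcoef, gcoef, gcoef, gcoef]
    simp only [l00, l01, l02, l03, l10, l11, l12, l13, l20, l21, l22, l23, l30, l31, l32, l33, map_add, map_smul, map_neg, map_zero, LinearMap.add_apply, LinearMap.smul_apply, LinearMap.neg_apply, LinearMap.zero_apply, hg, smul_eq_mul, Fin.reduceEq, Fin.isValue, reduceIte]
    norm_num
    try module
  have n33 : nabla (u 3) (u 3) = C • u 0 + F • u 1 + L • u 3 := by
    rw [hrep (nabla (u 3) (u 3)), gcoef, gcoef, gcoef, gcoef]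
    simp only [l00, l01, l02, l03, l10, l11, l12, l13, l20, l21, l22, l23, l30, l31, l32, l33, map_add, map_smul, map_neg, map_zero, LinearMap.add_apply, LinearMap.smul_apply, LinearMap.neg_apply, LinearMap.zero_apply, hg, smul_eq_mul, Fin.reduceEq, Fin.isValue, reduceIte]
    norm_num
    try module
  intro eps ef lap tr a b c d
  have hef0 : ef 0 = u 0 := rfl
  have hef1 : ef 1 = u 1 := rfl
  have hef2 : ef 2 = (-(1/2 : ℝ)) • u 2 + u 3 := rfl
  have hef3 : ef 3 = ((1/2 : ℝ)) • u 2 + u 3 := rfl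
  have heps0 : eps 0 = 1 := rfl
  have heps1 : eps 1 = 1 := rfl
  have heps2 : eps 2 = -1 := rfl
  have heps3 : eps 3 = 1 := rfl
  have hlapd : ∀ V, lap V = ∑ i : Fin 4, eps i • (nabla (ef i) (nabla (ef i) V) - nabla (nabla (ef i) (ef i)) V) := fun _ => rfl
  have htrd : ∀ V, tr V = ∑ i : Fin 4, eps i • (nabla (lie (nabla (ef i) V) V) (ef i) - nabla (nabla (ef i) V) (nabla V (ef i)) + nabla V (nabla (nabla (ef i) V) (ef i))) := fun _ => rfl
  rw [hlapd, htrd]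
  rw [Fin.sum_univ_four, Fin.sum_univ_four]
  rw [hef0, hef1, hef2, hef3, heps0, heps1, heps2, heps3]
  clear_value lap tr eps ef
  clear hlapd htrd hef0 hef1 hef2 hef3 heps0 heps1 heps2 heps3 lap tr eps ef
  constructor
  · rintro ⟨h1, -⟩
    simp only [n00, n01, n02, n03, n10, n11, n12, n13, n20, n21, n22, n23, n30, n31, n32, n33, l00, l01, l02, l03, l10, l11, l12, l13, l20, l21, l22, l23, l30, l31, l32, l33, map_add, map_smul, map_neg, map_zero, smul_add, smul_neg, smul_zero, smul_smul, LinearMap.add_apply, LinearMap.smul_apply, LinearMap.neg_apply, LinearMap.zero_apply] at h1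
    have h2 := congrArg (fun w => g w (u 3)) h1
    simp only [map_add, map_smul, map_neg, map_zero, map_sub, LinearMap.add_apply, LinearMap.smul_apply, LinearMap.neg_apply, LinearMap.zero_apply, LinearMap.sub_apply, hg, smul_eq_mul, Fin.reduceEq, Fin.isValue, reduceIte] at h2
    norm_num at h2
    have h4 : (0:ℝ) < (E+A)^2 := by rcases hEA.lt_or_gt with h|h <;> nlinarith
    have hpos : (0:ℝ) < E^2 + A^2 + B*D + B^2/2 + D^2/2 := by nlinarith [sq_nonneg (B+D)]
    have h3 : (E^2 + A^2 + B*D + B^2/2 + D^2/2) * (c + d) = 0 := by linear_combination -h2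
    rcases mul_eq_zero.mp h3 with h|h
    · linarith
    · linarith
  · intro hcd
    subst hcd
    constructor
    · simp only [n00, n01, n02, n03, n10, n11, n12, n13, n20, n21, n22, n23, n30, n31, n32, n33, l00, l01, l02, l03, l10, l11, l12, l13, l20, l21, l22, l23, l30, l31, l32, l33, map_add, map_smul, map_neg, map_zero, smul_add, smul_neg, smul_zero, smul_smul, LinearMap.add_apply, LinearMap.smul_apply, LinearMap.neg_apply, LinearMap.zero_apply]
      module
    · simp only [n00, n01, n02, n03, n10, n11, n12, n13, n20, n21, n22, n23, n30, n31, n32, n33, l00, l01, l02, l03, l10, l11, l12, l13, l20, l21, l22, l23, l30, l31, l32, l33, map_add, map_smul, map_neg, map_zero, smul_add, smul_neg, smul_zero, smul_smul, LinearMap.add_apply, LinearMap.smul_apply, LinearMap.neg_apply, LinearMap.zero_apply]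
      module
end
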